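/- Let G be a finite group and p a prime such that [Z(C(x)) : Z(G)] = p for every non-central x ∈ G. Then G is an F-group, G/Z(G) has exponent p, and if [G : Z(G)] = p^k then |Cent(G)| = (p^k − 1)/(p − 1) + 1. -/

import Mathlib

/-- The set of element centralizers of `G`. -/
def cent (G : Type*) [Group G] : Set (Subgroup G) :=
  Set.range fun x : G => Subgroup.centralizer {x}

/-- The number of distinct element centralizers of `G`. -/
noncomputable def numCent (G : Type*) [Group G] : ℕ := (cent G).ncard

/-- The center of the centralizer `C(x)`, viewed as a subgroup of `G`. -/
def centerCentralizer {G : Type*} [Group G] (x : G) : Subgroup G :=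
  Subgroup.centralizer {x} ⊓
    Subgroup.centralizer ((Subgroup.centralizer {x} : Subgroup G) : Set G)

/-- `G` is an F-group: for non-central `x, y`, `C(x) ≤ C(y)` implies `C(x) = C(y)`. -/
def IsFGroup (G : Type*) [Group G] : Prop :=
  ∀ x y : G, x ∉ Subgroup.center G → y ∉ Subgroup.center G →
    Subgroup.centralizer {x} ≤ Subgroup.centralizer {y} →
    Subgroup.centralizer ({x} : Set G) = Subgroup.centralizer {y}

/-- The set of conjugates of a subgroup `H` of `G`. -/
def conjugates {G : Type*} [Group G] (H : Subgroup G) : Set (Subgroup G) :=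
  {K | ∃ g : G, K = Subgroup.map (MulAut.conj g).toMonoidHom H}

/-- The number of `z`-classes of `G`: elements are `z`-equivalent when their
centralizers are conjugate in `G`, so the number of `z`-classes is the number of
distinct conjugacy classes of element centralizers. -/
noncomputable def numZClasses (G : Type*) [Group G] : ℕ :=
  (Set.range fun x : G => conjugates (Subgroup.centralizer {x})).ncard

section FGroupAux

open Subgroup

variable {G : Type*} [Group G]

lemma center_le_cc (x : G) : Subgroup.center G ≤ centerCentralizer x := by
  refine le_inf ?_ ?_ <;>
  · intro z hz
    rw [mem_centralizer_iff]
    intro g _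
    exact Subgroup.mem_center_iff.mp hz g

lemma mem_cc_self (x : G) : x ∈ centerCentralizer x := by
  rw [centerCentralizer, Subgroup.mem_inf]
  constructor
  · rw [mem_centralizer_iff]; intro g hg; simp_all
  · rw [mem_centralizer_iff]
    intro g hg
    exact (mem_centralizer_iff.mp hg x (Set.mem_singleton x)).symm

lemma centralizer_eq_top_iff {x : G} : Subgroup.centralizer {x} = ⊤ ↔ x ∈ Subgroup.center G := by
  constructor
  · intro hx
    rw [Subgroup.mem_center_iff]
    intro g
    have : g ∈ Subgroup.centralizer {x} := hx ▸ Subgroup.mem_top g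
    exact (mem_centralizer_iff.mp this x (Set.mem_singleton x)).symm
  · intro hx
    rw [eq_top_iff]
    intro g _
    rw [mem_centralizer_iff]
    intro y hy
    rw [Set.mem_singleton_iff] at hy
    subst hy
    exact (Subgroup.mem_center_iff.mp hx g).symm

lemma centralizer_le_of_eq_zpow_mul {x y z : G} (i : ℤ) (hz : z ∈ Subgroup.center G)
    (hx : x = y ^ i * z) : Subgroup.centralizer {y} ≤ Subgroup.centralizer {x} := by
  intro g hg
  rw [mem_centralizer_iff] at hg ⊢
  intro w hw
  rw [Set.mem_singleton_iff] at hw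
  subst hw hx
  have h1 : Commute g y := (hg y (Set.mem_singleton y)).symm
  have h2 : Commute g z := Subgroup.mem_center_iff.mp hz g
  exact ((h1.zpow_right i).mul_right h2).symm

lemma card_map_cc [Finite G] {p : ℕ} {x : G}
    (hx : (Subgroup.center G).relIndex (centerCentralizer x) = p) :
    Nat.card ((centerCentralizer x).map (QuotientGroup.mk' (Subgroup.center G))) = p := by
  set Z := Subgroup.center G
  set K := centerCentralizer x
  let f := (QuotientGroup.mk' Z).comp K.subtype
  have hker : f.ker = Z.subgroupOf K := by
    rw [show f.ker = (QuotientGroup.mk' Z).ker.comap K.subtype from rfl,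
      QuotientGroup.ker_mk', comap_subtype]
  have hrange : f.range = K.map (QuotientGroup.mk' Z) := by
    rw [show f = (QuotientGroup.mk' Z).comp K.subtype from rfl, MonoidHom.range_comp,
      range_subtype]
  have := Nat.card_congr (QuotientGroup.quotientKerEquivRange f).toEquiv
  rw [hker, hrange] at this
  rw [← this]
  exact hx

lemma orderOf_mk_eq [Finite G] {p : ℕ} (hp : p.Prime) {x : G} (hx : x ∉ Subgroup.center G)
    (hrel : (Subgroup.center G).relIndex (centerCentralizer x) = p) :
    orderOf (QuotientGroup.mk x : G ⧸ Subgroup.center G) = p := by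
  have hmem : (QuotientGroup.mk x : G ⧸ Subgroup.center G) ∈
      (centerCentralizer x).map (QuotientGroup.mk' (Subgroup.center G)) :=
    ⟨x, mem_cc_self x, rfl⟩
  have hdvd := Subgroup.orderOf_dvd_natCard _ hmem
  rw [card_map_cc hrel] at hdvd
  have hne : (QuotientGroup.mk x : G ⧸ Subgroup.center G) ≠ 1 := by
    simpa [QuotientGroup.eq_one_iff] using hx
  rcases (Nat.Prime.eq_one_or_self_of_dvd hp _ hdvd) with h1 | h1
  · exact absurd (orderOf_eq_one_iff.mp h1) hne
  · exact h1

lemma map_cc_eq_zpowers [Finite G] {p : ℕ} (hp : p.Prime) {x : G} (hx : x ∉ Subgroup.center G)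
    (hrel : (Subgroup.center G).relIndex (centerCentralizer x) = p) :
    (centerCentralizer x).map (QuotientGroup.mk' (Subgroup.center G)) =
      Subgroup.zpowers (QuotientGroup.mk x : G ⧸ Subgroup.center G) := by
  refine (Subgroup.eq_of_le_of_card_ge
    (Subgroup.zpowers_le.mpr (Subgroup.mem_map.mpr ⟨x, mem_cc_self x, rfl⟩)) ?_).symm
  rw [card_map_cc hrel, Nat.card_zpowers, QuotientGroup.mk'_apply, orderOf_mk_eq hp hx hrel]

lemma mem_zpowers_of_mem_cc [Finite G] {p : ℕ} (hp : p.Prime) {x y : G}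
    (hx : x ∉ Subgroup.center G)
    (hrel : (Subgroup.center G).relIndex (centerCentralizer x) = p)
    (hy : y ∈ centerCentralizer x) :
    (QuotientGroup.mk y : G ⧸ Subgroup.center G) ∈
      Subgroup.zpowers (QuotientGroup.mk x : G ⧸ Subgroup.center G) := by
  rw [← map_cc_eq_zpowers hp hx hrel]
  exact ⟨y, hy, rfl⟩

lemma centralizer_le_of_mk_mem_zpowers {x y : G}
    (hmem : (QuotientGroup.mk x : G ⧸ Subgroup.center G) ∈
      Subgroup.zpowers (QuotientGroup.mk y : G ⧸ Subgroup.center G)) :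
    Subgroup.centralizer {y} ≤ Subgroup.centralizer ({x} : Set G) := by
  obtain ⟨i, hi⟩ := hmem
  have : (QuotientGroup.mk (y ^ i) : G ⧸ Subgroup.center G) = QuotientGroup.mk x := by
    simpa using hi
  have hz : (y ^ i)⁻¹ * x ∈ Subgroup.center G := QuotientGroup.eq.mp this
  exact centralizer_le_of_eq_zpow_mul i hz (by group)

lemma mem_cc_of_centralizer_le {x y : G}
    (hxy : Subgroup.centralizer ({x} : Set G) ≤ Subgroup.centralizer {y}) :
    y ∈ centerCentralizer x := by
  have hyy : y ∈ Subgroup.centralizer ((Subgroup.centralizer {y} : Subgroup G) : Set G) := by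
    rw [mem_centralizer_iff]
    intro g hg
    exact (mem_centralizer_iff.mp hg y (Set.mem_singleton y)).symm
  have h2 : y ∈ Subgroup.centralizer ((Subgroup.centralizer {x} : Subgroup G) : Set G) :=
    Subgroup.centralizer_le hxy hyy
  refine ⟨?_, h2⟩
  have : ({x} : Set G) ⊆ (Subgroup.centralizer {x} : Subgroup G) := by
    intro w hw
    rw [Set.mem_singleton_iff] at hw
    subst hw
    rw [SetLike.mem_coe, mem_centralizer_iff]
    intro g hg
    simp_all
  exact Subgroup.centralizer_le this h2

lemma zpowers_eq_iff_mem {Q : Type*} [Group Q] [Finite Q] {a b : Q}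
    (hab : orderOf a = orderOf b) :
    Subgroup.zpowers b = Subgroup.zpowers a ↔ b ∈ Subgroup.zpowers a := by
  constructor
  · intro hEq; rw [← hEq]; exact Subgroup.mem_zpowers b
  · intro hmem
    refine Subgroup.eq_of_le_of_card_ge (Subgroup.zpowers_le.mpr hmem) ?_
    rw [Nat.card_zpowers, Nat.card_zpowers, hab]

lemma phi_mk (x : G) :
    Subgroup.centralizer
        ((QuotientGroup.mk : G → G ⧸ Subgroup.center G) ⁻¹' {QuotientGroup.mk x})
      = Subgroup.centralizer {x} := by
  refine le_antisymm (Subgroup.centralizer_le ?_) ?_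
  · intro w hw
    rw [Set.mem_singleton_iff] at hw
    subst hw
    simp
  · intro g hg
    rw [mem_centralizer_iff] at hg ⊢
    intro w hw
    rw [Set.mem_preimage, Set.mem_singleton_iff] at hw
    have hz : w⁻¹ * x ∈ Subgroup.center G := QuotientGroup.eq.mp hw
    have h1 : Commute g x := (hg x (Set.mem_singleton x)).symm
    have h2 : Commute g (w⁻¹ * x) := Subgroup.mem_center_iff.mp hz g
    have : Commute g w := by
      have := h1.mul_right h2.inv_right
      simpa [mul_assoc] using this
    exact this.symm

end FGroupAux

theorem stmt6 (G : Type*) [Group G] [Finite G] (p : ℕ) (hp : p.Prime)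
    (h : ∀ x : G, x ∉ Subgroup.center G →
      (Subgroup.center G).relIndex (centerCentralizer x) = p) :
    IsFGroup G ∧ (∀ a : G ⧸ Subgroup.center G, a ^ p = 1) ∧
      ∀ k : ℕ, (Subgroup.center G).index = p ^ k →
        numCent G = (p ^ k - 1) / (p - 1) + 1 := by
  refine ⟨?_, ?_, ?_⟩
  · -- F-group
    intro x y hx hy hxy
    have hyK : y ∈ centerCentralizer x := mem_cc_of_centralizer_le hxy
    have h1 : (QuotientGroup.mk y : G ⧸ Subgroup.center G) ∈
        Subgroup.zpowers (QuotientGroup.mk x : G ⧸ Subgroup.center G) :=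
      mem_zpowers_of_mem_cc hp hx (h x hx) hyK
    have hord : orderOf (QuotientGroup.mk x : G ⧸ Subgroup.center G) =
        orderOf (QuotientGroup.mk y : G ⧸ Subgroup.center G) := by
      rw [orderOf_mk_eq hp hx (h x hx), orderOf_mk_eq hp hy (h y hy)]
    have h2 := (zpowers_eq_iff_mem hord).mpr h1
    have h3 : (QuotientGroup.mk x : G ⧸ Subgroup.center G) ∈
        Subgroup.zpowers (QuotientGroup.mk y : G ⧸ Subgroup.center G) := by
      rw [h2]; exact Subgroup.mem_zpowers _
    exact le_antisymm hxy (centralizer_le_of_mk_mem_zpowers h3)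
  · -- exponent
    intro a
    obtain ⟨x, rfl⟩ := QuotientGroup.mk_surjective a
    by_cases hx : x ∈ Subgroup.center G
    · rw [(QuotientGroup.eq_one_iff x).mpr hx, one_pow]
    · rw [← orderOf_mk_eq hp hx (h x hx)]
      exact pow_orderOf_eq_one _
  · -- counting
    intro k hk
    classical
    have : Fintype (G ⧸ Subgroup.center G) := Fintype.ofFinite _
    set φ : (G ⧸ Subgroup.center G) → Subgroup G := fun a =>
      Subgroup.centralizer ((QuotientGroup.mk : G → G ⧸ Subgroup.center G) ⁻¹' {a}) with hφ
    have hφmk : ∀ x : G, φ (QuotientGroup.mk x) = Subgroup.centralizer {x} := fun x => phi_mk x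
    set Ω : Finset (G ⧸ Subgroup.center G) := Finset.univ.filter (fun a => a ≠ 1) with hΩ
    have hlift : ∀ a : G ⧸ Subgroup.center G, a ≠ 1 →
        ∃ x : G, x ∉ Subgroup.center G ∧ QuotientGroup.mk x = a := by
      intro a ha
      obtain ⟨x, rfl⟩ := QuotientGroup.mk_surjective a
      exact ⟨x, by simpa [QuotientGroup.eq_one_iff] using ha, rfl⟩
    have hmemΩ : ∀ a : G ⧸ Subgroup.center G, a ∈ Ω ↔ a ≠ 1 := by
      intro a; simp [hΩ]
    have hord : ∀ a : G ⧸ Subgroup.center G, a ≠ 1 → orderOf a = p := by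
      intro a ha
      obtain ⟨x, hx, rfl⟩ := hlift a ha
      exact orderOf_mk_eq hp hx (h x hx)
    have hfib : ∀ a b : G ⧸ Subgroup.center G, a ≠ 1 → b ≠ 1 →
        (φ b = φ a ↔ b ∈ Subgroup.zpowers a) := by
      intro a b ha hb
      obtain ⟨x, hx, rfl⟩ := hlift a ha
      obtain ⟨y, hy, rfl⟩ := hlift b hb
      rw [hφmk, hφmk]
      constructor
      · intro hEq
        exact mem_zpowers_of_mem_cc hp hx (h x hx) (mem_cc_of_centralizer_le hEq.ge)
      · intro hmem
        have horder : orderOf (QuotientGroup.mk x : G ⧸ Subgroup.center G) =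
            orderOf (QuotientGroup.mk y : G ⧸ Subgroup.center G) := by
          rw [orderOf_mk_eq hp hx (h x hx), orderOf_mk_eq hp hy (h y hy)]
        have h2 := (zpowers_eq_iff_mem horder).mpr hmem
        have h3 : (QuotientGroup.mk x : G ⧸ Subgroup.center G) ∈
            Subgroup.zpowers (QuotientGroup.mk y : G ⧸ Subgroup.center G) := by
          rw [h2]; exact Subgroup.mem_zpowers _
        exact le_antisymm (centralizer_le_of_mk_mem_zpowers h3) (centralizer_le_of_mk_mem_zpowers hmem)
    have hcent : cent G = insert ⊤ (φ '' (Ω : Set (G ⧸ Subgroup.center G))) := by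
      ext H
      simp only [cent, Set.mem_range, Set.mem_insert_iff, Set.mem_image, Finset.mem_coe]
      constructor
      · rintro ⟨x, rfl⟩
        by_cases hx : x ∈ Subgroup.center G
        · left; exact centralizer_eq_top_iff.mpr hx
        · right
          refine ⟨QuotientGroup.mk x, (hmemΩ _).mpr ?_, hφmk x⟩
          simpa [QuotientGroup.eq_one_iff] using hx
      · rintro (rfl | ⟨a, ha, rfl⟩)
        · exact ⟨1, centralizer_eq_top_iff.mpr (Subgroup.one_mem _)⟩
        · obtain ⟨x, hx, rfl⟩ := hlift a ((hmemΩ _).mp ha)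
          exact ⟨x, (hφmk x).symm⟩
    have htop : ⊤ ∉ φ '' (Ω : Set (G ⧸ Subgroup.center G)) := by
      rintro ⟨a, ha, hEq⟩
      obtain ⟨x, hx, rfl⟩ := hlift a ((hmemΩ _).mp ha)
      rw [hφmk] at hEq
      exact hx (centralizer_eq_top_iff.mp hEq)
    have h1 : numCent G = (Ω.image φ).card + 1 := by
      rw [numCent, hcent, Set.ncard_insert_of_notMem htop (Set.toFinite _),
        ← Finset.coe_image, Set.ncard_coe_finset]
    have hfibcard : ∀ H ∈ Ω.image φ, (Ω.filter (fun b => φ b = H)).card = p - 1 := by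
      intro H hH
      obtain ⟨a, haΩ, rfl⟩ := Finset.mem_image.mp hH
      have ha : a ≠ 1 := (hmemΩ _).mp haΩ
      have hset : Ω.filter (fun b => φ b = φ a) =
          (Finset.univ.filter (fun b => b ∈ Subgroup.zpowers a)).erase 1 := by
        ext b
        simp only [Finset.mem_filter, Finset.mem_erase, Finset.mem_univ, true_and, hΩ]
        constructor
        · rintro ⟨hb, hEq⟩
          exact ⟨hb, (hfib a b ha hb).mp hEq⟩
        · rintro ⟨hb, hmem⟩
          exact ⟨hb, (hfib a b ha hb).mpr hmem⟩
      rw [hset, Finset.card_erase_of_mem (by simp [Subgroup.one_mem])]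
      have : (Finset.univ.filter (fun b => b ∈ Subgroup.zpowers a)).card = p := by
        rw [← Fintype.card_subtype, ← Nat.card_eq_fintype_card, Nat.card_zpowers, hord a ha]
      rw [this]
    have hsum : Ω.card = (Ω.image φ).card * (p - 1) := by
      rw [Finset.card_eq_sum_card_fiberwise (fun x hx => Finset.mem_image_of_mem φ hx),
        Finset.sum_congr rfl hfibcard, Finset.sum_const, smul_eq_mul]
    have hΩcard : Ω.card = p ^ k - 1 := by
      rw [hΩ, Finset.filter_ne', Finset.card_erase_of_mem (Finset.mem_univ 1),
        Finset.card_univ, ← Nat.card_eq_fintype_card]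
      rw [show Nat.card (G ⧸ Subgroup.center G) = (Subgroup.center G).index from rfl, hk]
    have hpos : 0 < p - 1 := by have := hp.one_lt; omega
    have himg : (Ω.image φ).card = (p ^ k - 1) / (p - 1) := by
      rw [← hΩcard, hsum, Nat.mul_div_cancel _ hpos]
    rw [h1, himg]
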